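/- Distinct desired information property of capacity achieving ULDCs (Lemma 3, Property 2(b)): let N ≥ 2, K ≥ 1, and consider a universal locally decodable code (ULDC) with locality N, K source symbols of entropy L_w > 0, M coded symbols of entropy L_x, and symbol rate L_w/L_x = C*(N,K). Then for every k ∈ {1,…,K}, every decoding set S ∈ 𝒮_k, and every pair of distinct indices i₁, i₂ ∈ S, the coded symbols X_{i₁} and X_{i₂} contain distinct information about W_k: H(X_{i₁} | X_{i₂}, W_k̄) = H(X_{i₁} | W_k̄), where W_k̄ is the tuple of all source symbols other than W_k. -/

import Mathlib

open scoped BigOperators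

noncomputable section

/-- A finite probability space: a finite type together with a probability mass function. -/
structure FinProbSpace where
  Ω : Type
  [fin : Fintype Ω]
  p : Ω → ℝ
  nonneg : ∀ ω, 0 ≤ p ω
  sum_one : ∑ ω, p ω = 1

attribute [instance] FinProbSpace.fin

namespace FinProbSpace

variable (P : FinProbSpace)

/-- Probability that the random variable `X` takes the value `a`. -/
def prob {α : Type} [DecidableEq α] (X : P.Ω → α) (a : α) : ℝ :=
  ∑ ω, if X ω = a then P.p ω else 0

/-- Shannon entropy (in bits) of a finitely valued random variable. -/
def H {α : Type} [Fintype α] [DecidableEq α] (X : P.Ω → α) : ℝ :=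
  ∑ a, -(P.prob X a * Real.logb 2 (P.prob X a))

/-- Conditional Shannon entropy `H(X | Y) = H(X, Y) - H(Y)` (in bits). -/
def condH {α β : Type} [Fintype α] [DecidableEq α] [Fintype β] [DecidableEq β]
    (X : P.Ω → α) (Y : P.Ω → β) : ℝ :=
  P.H (fun ω => (X ω, Y ω)) - P.H Y

/-- The tuple random variable `(X_i)_{i ∈ ι}`. -/
def tuple {ι V : Type} (X : ι → P.Ω → V) : P.Ω → ι → V := fun ω i => X i ω

/-- Joint (mutual) independence of a finite family of random variables. -/
def iIndep {ι V : Type} [Fintype ι] [DecidableEq ι] [DecidableEq V] (X : ι → P.Ω → V) : Prop :=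
  ∀ a : ι → V, P.prob (P.tuple X) a = ∏ i, P.prob (X i) (a i)

/-- `X` and `Y` contain the same information about everything beyond `Z`:
`H(X | Y, Z) = H(Y | X, Z) = 0`. -/
def sameInfo {α β γ : Type} [Fintype α] [DecidableEq α] [Fintype β] [DecidableEq β]
    [Fintype γ] [DecidableEq γ] (X : P.Ω → α) (Y : P.Ω → β) (Z : P.Ω → γ) : Prop :=
  P.condH X (fun ω => (Y ω, Z ω)) = 0 ∧ P.condH Y (fun ω => (X ω, Z ω)) = 0

end FinProbSpace

namespace FinProbSpace

open Real Finset

variable (P : FinProbSpace)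

/-- Natural-log entropy. -/
def Hn {α : Type} [Fintype α] [DecidableEq α] (X : P.Ω → α) : ℝ :=
  ∑ a, Real.negMulLog (P.prob X a)

lemma H_eq_Hn {α : Type} [Fintype α] [DecidableEq α] (X : P.Ω → α) :
    P.H X = P.Hn X / Real.log 2 := by
  rw [H, Hn, Finset.sum_div]
  refine Finset.sum_congr rfl fun a _ => ?_
  rw [Real.negMulLog, Real.logb]
  ring

lemma prob_nonneg {α : Type} [DecidableEq α] (X : P.Ω → α) (a : α) : 0 ≤ P.prob X a :=
  Finset.sum_nonneg fun ω _ => by split <;> simp [P.nonneg ω]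

lemma sum_prob {α : Type} [Fintype α] [DecidableEq α] (X : P.Ω → α) :
    ∑ a, P.prob X a = 1 := by
  unfold prob
  rw [Finset.sum_comm]
  simp [P.sum_one]

lemma prob_le_one {α : Type} [Fintype α] [DecidableEq α] (X : P.Ω → α) (a : α) :
    P.prob X a ≤ 1 := by
  rw [← P.sum_prob X]
  exact Finset.single_le_sum (fun b _ => P.prob_nonneg X b) (Finset.mem_univ a)

lemma Hn_nonneg {α : Type} [Fintype α] [DecidableEq α] (X : P.Ω → α) : 0 ≤ P.Hn X :=
  Finset.sum_nonneg fun a _ => Real.negMulLog_nonneg (P.prob_nonneg X a) (P.prob_le_one X a)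

lemma prob_eq_zero_of_not_mem {α : Type} [DecidableEq α] (X : P.Ω → α) (a : α)
    (ha : ∀ ω, X ω ≠ a) : P.prob X a = 0 := by
  unfold prob
  exact Finset.sum_eq_zero fun ω _ => by simp [ha ω]

lemma Hn_eq_sum_image {α : Type} [Fintype α] [DecidableEq α] (X : P.Ω → α) :
    P.Hn X = ∑ a ∈ Finset.univ.image X, Real.negMulLog (P.prob X a) := by
  rw [Hn]
  refine (Finset.sum_subset (Finset.subset_univ _) fun a _ ha => ?_).symm
  have : P.prob X a = 0 := by
    refine P.prob_eq_zero_of_not_mem X a fun ω h => ha ?_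
    rw [← h]; exact Finset.mem_image_of_mem X (Finset.mem_univ ω)
  rw [this]
  exact Real.negMulLog_zero

lemma Hn_comp {α β : Type} [Fintype α] [DecidableEq α] [Fintype β] [DecidableEq β]
    (X : P.Ω → α) (f : α → β) (hf : ∀ ω ω', f (X ω) = f (X ω') → X ω = X ω') :
    P.Hn (fun ω => f (X ω)) = P.Hn X := by
  have himg : (Finset.univ.image fun ω => f (X ω)) = (Finset.univ.image X).image f := by
    ext b; simp [Finset.mem_image]
  have hinj : ∀ a ∈ Finset.univ.image X, ∀ a' ∈ Finset.univ.image X, f a = f a' → a = a' := by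
    intro a ha a' ha' h
    obtain ⟨ω, _, rfl⟩ := Finset.mem_image.1 ha
    obtain ⟨ω', _, rfl⟩ := Finset.mem_image.1 ha'
    exact hf ω ω' h
  have hprob : ∀ a ∈ Finset.univ.image X,
      P.prob (fun ω => f (X ω)) (f a) = P.prob X a := by
    intro a ha
    obtain ⟨ω₀, _, rfl⟩ := Finset.mem_image.1 ha
    unfold prob
    refine Finset.sum_congr rfl fun ω _ => ?_
    congr 1
    simp only [eq_iff_iff]
    exact ⟨fun h => hf ω ω₀ h, fun h => by rw [h]⟩
  rw [P.Hn_eq_sum_image, P.Hn_eq_sum_image X, himg, Finset.sum_image hinj]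
  exact Finset.sum_congr rfl fun a ha => by rw [hprob a ha]

/-- Entropy invariance for mutually determined random variables. -/
lemma Hn_congr {α β : Type} [Fintype α] [DecidableEq α] [Fintype β] [DecidableEq β]
    (X : P.Ω → α) (Y : P.Ω → β) (f : α → β) (g : β → α)
    (hf : ∀ ω, Y ω = f (X ω)) (hg : ∀ ω, X ω = g (Y ω)) : P.Hn X = P.Hn Y := by
  have h1 : P.Hn (fun ω => f (X ω)) = P.Hn X := by
    refine P.Hn_comp X f fun ω ω' h => ?_
    rw [hg ω, hg ω', hf ω, hf ω', h]
  rw [← h1]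
  congr 1
  funext ω
  exact (hf ω).symm

lemma H_congr {α β : Type} [Fintype α] [DecidableEq α] [Fintype β] [DecidableEq β]
    (X : P.Ω → α) (Y : P.Ω → β) (f : α → β) (g : β → α)
    (hf : ∀ ω, Y ω = f (X ω)) (hg : ∀ ω, X ω = g (Y ω)) : P.H X = P.H Y := by
  rw [P.H_eq_Hn, P.H_eq_Hn, P.Hn_congr X Y f g hf hg]

end FinProbSpace
namespace FinProbSpace

open Real Finset

lemma negMulLog_sum_le {ι : Type*} (s : Finset ι) (t : ι → ℝ) (ht : ∀ i ∈ s, 0 ≤ t i) :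
    Real.negMulLog (∑ i ∈ s, t i) ≤ ∑ i ∈ s, Real.negMulLog (t i) := by
  have hT : Real.negMulLog (∑ i ∈ s, t i) = ∑ i ∈ s, -(t i * Real.log (∑ j ∈ s, t j)) := by
    simp [Real.negMulLog, Finset.sum_mul, ← Finset.sum_neg_distrib]
  rw [hT]
  refine Finset.sum_le_sum fun i hi => ?_
  rcases eq_or_lt_of_le (ht i hi) with h | h
  · simp [Real.negMulLog, ← h]
  · have hle : t i ≤ ∑ j ∈ s, t j := Finset.single_le_sum ht hi
    have := Real.log_le_log h hle
    rw [Real.negMulLog]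
    nlinarith

variable (P : FinProbSpace)

lemma prob_pair_snd {α β : Type} [Fintype α] [DecidableEq α] [DecidableEq β]
    (X : P.Ω → α) (Y : P.Ω → β) (b : β) :
    P.prob Y b = ∑ a, P.prob (fun ω => (X ω, Y ω)) (a, b) := by
  unfold prob
  rw [Finset.sum_comm]
  refine Finset.sum_congr rfl fun ω _ => ?_
  rw [Finset.sum_eq_single (X ω)]
  · simp
  · intro a _ ha
    simp only [Prod.mk.injEq, ite_eq_right_iff, and_imp]
    intro h1 _; exact absurd h1 (Ne.symm ha)
  · intro h; exact absurd (Finset.mem_univ _) h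

/-- Monotonicity: `H(Y) ≤ H(X, Y)`. -/
lemma Hn_snd_le {α β : Type} [Fintype α] [DecidableEq α] [Fintype β] [DecidableEq β]
    (X : P.Ω → α) (Y : P.Ω → β) :
    P.Hn Y ≤ P.Hn (fun ω => (X ω, Y ω)) := by
  rw [Hn, Hn, Fintype.sum_prod_type_right]
  refine Finset.sum_le_sum fun b _ => ?_
  rw [P.prob_pair_snd X Y b]
  exact negMulLog_sum_le _ _ fun a _ => P.prob_nonneg _ _

/-- Natural-log conditional entropy. -/
def condHn {α β : Type} [Fintype α] [DecidableEq α] [Fintype β] [DecidableEq β]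
    (X : P.Ω → α) (Y : P.Ω → β) : ℝ :=
  P.Hn (fun ω => (X ω, Y ω)) - P.Hn Y

lemma condH_eq_condHn {α β : Type} [Fintype α] [DecidableEq α] [Fintype β] [DecidableEq β]
    (X : P.Ω → α) (Y : P.Ω → β) :
    P.condH X Y = P.condHn X Y / Real.log 2 := by
  rw [condH, condHn, P.H_eq_Hn, P.H_eq_Hn, sub_div]

lemma condHn_nonneg {α β : Type} [Fintype α] [DecidableEq α] [Fintype β] [DecidableEq β]
    (X : P.Ω → α) (Y : P.Ω → β) : 0 ≤ P.condHn X Y :=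
  sub_nonneg.2 (P.Hn_snd_le X Y)

/-- If `X` is a function of `Y` then `H(X | Y) = 0` (as `H(X,Y) = H(Y)`). -/
lemma Hn_pair_of_fn {α β : Type} [Fintype α] [DecidableEq α] [Fintype β] [DecidableEq β]
    (X : P.Ω → α) (Y : P.Ω → β) (g : β → α) (hg : ∀ ω, X ω = g (Y ω)) :
    P.Hn (fun ω => (X ω, Y ω)) = P.Hn Y :=
  P.Hn_congr _ Y Prod.snd (fun y => (g y, y)) (fun ω => rfl)
    (fun ω => by simp [← hg ω])

lemma condHn_of_fn {α β : Type} [Fintype α] [DecidableEq α] [Fintype β] [DecidableEq β]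
    (X : P.Ω → α) (Y : P.Ω → β) (g : β → α) (hg : ∀ ω, X ω = g (Y ω)) :
    P.condHn X Y = 0 := by
  rw [condHn, P.Hn_pair_of_fn X Y g hg, sub_self]

/-- Pair associativity for entropy. -/
lemma Hn_assoc {α β γ : Type} [Fintype α] [DecidableEq α] [Fintype β] [DecidableEq β]
    [Fintype γ] [DecidableEq γ] (X : P.Ω → α) (Y : P.Ω → β) (Z : P.Ω → γ) :
    P.Hn (fun ω => ((X ω, Y ω), Z ω)) = P.Hn (fun ω => (X ω, (Y ω, Z ω))) :=
  P.Hn_congr _ _ (fun p => (p.1.1, (p.1.2, p.2))) (fun p => ((p.1, p.2.1), p.2.2))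
    (fun ω => rfl) (fun ω => rfl)

/-- Pair commutativity for entropy. -/
lemma Hn_comm {α β : Type} [Fintype α] [DecidableEq α] [Fintype β] [DecidableEq β]
    (X : P.Ω → α) (Y : P.Ω → β) :
    P.Hn (fun ω => (X ω, Y ω)) = P.Hn (fun ω => (Y ω, X ω)) :=
  P.Hn_congr _ _ Prod.swap Prod.swap (fun ω => rfl) (fun ω => rfl)

/-- Chain rule: `H(X, Y | Z) = H(X | Y, Z) + H(Y | Z)`. -/
lemma condHn_chain {α β γ : Type} [Fintype α] [DecidableEq α] [Fintype β] [DecidableEq β]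
    [Fintype γ] [DecidableEq γ] (X : P.Ω → α) (Y : P.Ω → β) (Z : P.Ω → γ) :
    P.condHn (fun ω => (X ω, Y ω)) Z =
      P.condHn X (fun ω => (Y ω, Z ω)) + P.condHn Y Z := by
  rw [condHn, condHn, condHn, P.Hn_assoc]
  ring

/-- `H(Y | Z) ≤ H(X, Y | Z)`. -/
lemma condHn_snd_le {α β γ : Type} [Fintype α] [DecidableEq α] [Fintype β] [DecidableEq β]
    [Fintype γ] [DecidableEq γ] (X : P.Ω → α) (Y : P.Ω → β) (Z : P.Ω → γ) :
    P.condHn Y Z ≤ P.condHn (fun ω => (X ω, Y ω)) Z := by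
  rw [condHn, condHn, P.Hn_assoc]
  have := P.Hn_snd_le X (fun ω => (Y ω, Z ω))
  have h2 := P.Hn_assoc X Y Z
  linarith [P.Hn_snd_le X (fun ω => (Y ω, Z ω))]

end FinProbSpace
namespace FinProbSpace

open Real Finset

section Core

variable {α β γ : Type} [Fintype α] [Fintype β] [Fintype γ]

private lemma sum_rotate {A B C : Type*} [Fintype A] [Fintype B] [Fintype C] (F : A → B → C → ℝ) :
    ∑ a, ∑ b, ∑ c, F a b c = ∑ c, ∑ a, ∑ b, F a b c := by
  rw [show (∑ a, ∑ b, ∑ c, F a b c) = ∑ a, ∑ c, ∑ b, F a b c from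
    Finset.sum_congr rfl fun a _ => Finset.sum_comm]
  exact Finset.sum_comm

private lemma factor_negMulLog {ι : Type*} [Fintype ι] (f : ι → ℝ) (T : ℝ)
    (h : ∑ i, f i = T) : Real.negMulLog T = ∑ i, -(f i * Real.log T) := by
  rw [Real.negMulLog, ← h, neg_mul, Finset.sum_mul, ← Finset.sum_neg_distrib]

/-- Core submodularity-type inequality for nonnegative arrays. -/
lemma core_ineq (q : α → β → γ → ℝ) (hq : ∀ a b c, 0 ≤ q a b c) :
    (∑ a, ∑ b, ∑ c, Real.negMulLog (q a b c)) +
      (∑ c, Real.negMulLog (∑ a, ∑ b, q a b c)) ≤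
    (∑ a, ∑ c, Real.negMulLog (∑ b, q a b c)) +
      (∑ b, ∑ c, Real.negMulLog (∑ a, q a b c)) := by
  classical
  set qxz : α → γ → ℝ := fun a c => ∑ b, q a b c with hqxz
  set qyz : β → γ → ℝ := fun b c => ∑ a, q a b c with hqyz
  set qz : γ → ℝ := fun c => ∑ a, ∑ b, q a b c with hqz
  have hqxz_nn : ∀ a c, 0 ≤ qxz a c := fun a c => Finset.sum_nonneg fun b _ => hq a b c
  have hqyz_nn : ∀ b c, 0 ≤ qyz b c := fun b c => Finset.sum_nonneg fun a _ => hq a b c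
  have hqz_nn : ∀ c, 0 ≤ qz c := fun c =>
    Finset.sum_nonneg fun a _ => Finset.sum_nonneg fun b _ => hq a b c
  have hq_le_qxz : ∀ a b c, q a b c ≤ qxz a c := fun a b c =>
    Finset.single_le_sum (fun b' _ => hq a b' c) (Finset.mem_univ b)
  have hq_le_qyz : ∀ a b c, q a b c ≤ qyz b c := fun a b c =>
    Finset.single_le_sum (fun a' _ => hq a' b c) (Finset.mem_univ a)
  have hq_le_qz : ∀ a b c, q a b c ≤ qz c := fun a b c =>
    le_trans (hq_le_qxz a b c)
      (Finset.single_le_sum (fun a' _ => hqxz_nn a' c) (Finset.mem_univ a))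
  have hxz_sum : ∀ c, ∑ a, qxz a c = qz c := fun c => rfl
  have hyz_sum : ∀ c, ∑ b, qyz b c = qz c := fun c => Finset.sum_comm
  have reord : ∀ F : α → β → γ → ℝ,
      (∑ a, ∑ b, ∑ c, F a b c) = ∑ c, ∑ a, ∑ b, F a b c := fun F => sum_rotate F
  -- rewrite all entropies as canonical triple sums
  have e1 : ∑ c, Real.negMulLog (qz c) = ∑ a, ∑ b, ∑ c, -(q a b c * Real.log (qz c)) := by
    have h0 : ∀ c, Real.negMulLog (qz c) = ∑ a, ∑ b, -(q a b c * Real.log (qz c)) := by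
      intro c
      rw [factor_negMulLog (fun a => ∑ b, q a b c) (qz c) rfl]
      exact Finset.sum_congr rfl fun a _ => by
        rw [Finset.sum_mul, ← Finset.sum_neg_distrib]
    rw [Finset.sum_congr rfl fun c (_ : c ∈ Finset.univ) => h0 c]
    exact (reord _).symm
  have e2 : ∑ a, ∑ c, Real.negMulLog (qxz a c)
      = ∑ a, ∑ b, ∑ c, -(q a b c * Real.log (qxz a c)) := by
    refine Finset.sum_congr rfl fun a _ => ?_
    rw [Finset.sum_congr rfl fun c (_ : c ∈ Finset.univ) =>
      factor_negMulLog (fun b => q a b c) (qxz a c) rfl]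
    exact Finset.sum_comm
  have e3 : ∑ b, ∑ c, Real.negMulLog (qyz b c)
      = ∑ a, ∑ b, ∑ c, -(q a b c * Real.log (qyz b c)) := by
    rw [Finset.sum_congr rfl fun b (_ : b ∈ Finset.univ) => Finset.sum_congr rfl
      fun c (_ : c ∈ Finset.univ) => factor_negMulLog (fun a => q a b c) (qyz b c) rfl]
    exact sum_rotate (fun b c a => -(q a b c * Real.log (qyz b c)))
  rw [e1, e2, e3]
  -- combine into one triple sum
  have comb : ∀ (F G : α → β → γ → ℝ),
      (∑ a, ∑ b, ∑ c, F a b c) + (∑ a, ∑ b, ∑ c, G a b c)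
        = ∑ a, ∑ b, ∑ c, (F a b c + G a b c) := by
    intro F G
    rw [← Finset.sum_add_distrib]
    exact Finset.sum_congr rfl fun a _ => by
      rw [← Finset.sum_add_distrib]
      exact Finset.sum_congr rfl fun b _ => (Finset.sum_add_distrib).symm
  rw [comb, comb]
  -- the slack term
  set u : α → β → γ → ℝ := fun a b c =>
    (if 0 < qz c then qxz a c * qyz b c / qz c else 0) - q a b c with hu
  have key : ∀ a b c,
      Real.negMulLog (q a b c) + -(q a b c * Real.log (qz c)) ≤
        (-(q a b c * Real.log (qxz a c)) + -(q a b c * Real.log (qyz b c))) + u a b c := by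
    intro a b c
    rcases eq_or_lt_of_le (hq a b c) with h | h
    · have h0 : q a b c = 0 := h.symm
      simp only [hu, h0, Real.negMulLog_zero, zero_mul, neg_zero, add_zero, zero_add, sub_zero]
      by_cases hz : 0 < qz c
      · rw [if_pos hz]
        exact div_nonneg (mul_nonneg (hqxz_nn a c) (hqyz_nn b c)) (hqz_nn c)
      · rw [if_neg hz]
    · have hxz : 0 < qxz a c := lt_of_lt_of_le h (hq_le_qxz a b c)
      have hyz : 0 < qyz b c := lt_of_lt_of_le h (hq_le_qyz a b c)
      have hz : 0 < qz c := lt_of_lt_of_le h (hq_le_qz a b c)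
      simp only [hu, if_pos hz]
      have hlog : Real.log (qxz a c * qyz b c / (q a b c * qz c)) ≤
          qxz a c * qyz b c / (q a b c * qz c) - 1 :=
        Real.log_le_sub_one_of_pos (by positivity)
      have hexp : Real.log (qxz a c * qyz b c / (q a b c * qz c)) =
          Real.log (qxz a c) + Real.log (qyz b c) - Real.log (q a b c) - Real.log (qz c) := by
        rw [Real.log_div (by positivity) (by positivity),
          Real.log_mul (ne_of_gt hxz) (ne_of_gt hyz),
          Real.log_mul (ne_of_gt h) (ne_of_gt hz)]
        ring
      have hmul := mul_le_mul_of_nonneg_left hlog (le_of_lt h)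
      rw [hexp] at hmul
      have harith : q a b c * (qxz a c * qyz b c / (q a b c * qz c) - 1)
          = qxz a c * qyz b c / qz c - q a b c := by
        field_simp
      rw [harith] at hmul
      rw [Real.negMulLog, neg_mul]
      nlinarith [hmul]
  have husum : (∑ a, ∑ b, ∑ c, u a b c) ≤ 0 := by
    have hsplit : (∑ a, ∑ b, ∑ c, u a b c)
        = (∑ a, ∑ b, ∑ c, if 0 < qz c then qxz a c * qyz b c / qz c else 0)
          - (∑ a, ∑ b, ∑ c, q a b c) := by
      simp only [hu, Finset.sum_sub_distrib]
    rw [hsplit, sub_nonpos, reord, reord]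
    refine Finset.sum_le_sum fun c _ => ?_
    by_cases hz : 0 < qz c
    · simp only [if_pos hz]
      have hprod : (∑ a, qxz a c) * (∑ b, qyz b c) / qz c
          = ∑ a, ∑ b, qxz a c * qyz b c / qz c := by
        rw [Fintype.sum_mul_sum]
        simp only [Finset.sum_div]
      refine le_of_eq ?_
      calc ∑ a, ∑ b, qxz a c * qyz b c / qz c
          = (∑ a, qxz a c) * (∑ b, qyz b c) / qz c := hprod.symm
        _ = qz c := by
            rw [hxz_sum, hyz_sum]
            exact mul_div_cancel_right₀ _ (ne_of_gt hz)
        _ = ∑ a, ∑ b, q a b c := rfl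
    · simp only [if_neg hz]
      simp only [Finset.sum_const_zero]
      exact Finset.sum_nonneg fun a _ => Finset.sum_nonneg fun b _ => hq a b c
  calc (∑ a, ∑ b, ∑ c, (Real.negMulLog (q a b c) + -(q a b c * Real.log (qz c))))
      ≤ ∑ a, ∑ b, ∑ c,
          ((-(q a b c * Real.log (qxz a c)) + -(q a b c * Real.log (qyz b c))) + u a b c) := by
        refine Finset.sum_le_sum fun a _ => Finset.sum_le_sum fun b _ =>
          Finset.sum_le_sum fun c _ => key a b c
    _ = (∑ a, ∑ b, ∑ c, (-(q a b c * Real.log (qxz a c)) + -(q a b c * Real.log (qyz b c))))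
          + (∑ a, ∑ b, ∑ c, u a b c) := (comb _ _).symm
    _ ≤ _ := by linarith [husum]

end Core

end FinProbSpace
namespace FinProbSpace

open Real Finset

variable (P : FinProbSpace)

section CondReduce

variable {α β γ : Type} [Fintype α] [DecidableEq α] [Fintype β] [DecidableEq β]
  [Fintype γ] [DecidableEq γ] (X : P.Ω → α) (Y : P.Ω → β) (Z : P.Ω → γ)

private lemma marg1 (a : α) (c : γ) :
    ∑ b, P.prob (fun ω => (X ω, (Y ω, Z ω))) (a, (b, c))
      = P.prob (fun ω => (X ω, Z ω)) (a, c) := by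
  unfold prob
  rw [Finset.sum_comm]
  refine Finset.sum_congr rfl fun ω _ => ?_
  rw [Finset.sum_eq_single (Y ω)]
  · simp [Prod.mk.injEq]
  · intro b _ hb
    simp only [Prod.mk.injEq, ite_eq_right_iff, and_imp]
    intro _ h2 _
    exact absurd h2 (Ne.symm hb)
  · intro h; exact absurd (Finset.mem_univ _) h

private lemma marg2 (b : β) (c : γ) :
    ∑ a, P.prob (fun ω => (X ω, (Y ω, Z ω))) (a, (b, c))
      = P.prob (fun ω => (Y ω, Z ω)) (b, c) := by
  unfold prob
  rw [Finset.sum_comm]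
  refine Finset.sum_congr rfl fun ω _ => ?_
  rw [Finset.sum_eq_single (X ω)]
  · simp [Prod.mk.injEq]
  · intro a _ ha
    simp only [Prod.mk.injEq, ite_eq_right_iff, and_imp]
    intro h1 _ _
    exact absurd h1 (Ne.symm ha)
  · intro h; exact absurd (Finset.mem_univ _) h

private lemma marg3 (c : γ) :
    ∑ a, ∑ b, P.prob (fun ω => (X ω, (Y ω, Z ω))) (a, (b, c)) = P.prob Z c := by
  rw [Finset.sum_comm]
  rw [Finset.sum_congr rfl fun b (_ : b ∈ Finset.univ) => P.marg2 X Y Z b c]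
  exact (P.prob_pair_snd Y Z c).symm

/-- Conditioning reduces entropy: `H(X | Y, Z) ≤ H(X | Z)`. -/
lemma condHn_cond_le :
    P.condHn X (fun ω => (Y ω, Z ω)) ≤ P.condHn X Z := by
  have core := core_ineq (fun a b c => P.prob (fun ω => (X ω, (Y ω, Z ω))) (a, (b, c)))
    (fun a b c => P.prob_nonneg _ _)
  have hJ : P.Hn (fun ω => (X ω, (Y ω, Z ω)))
      = ∑ a, ∑ b, ∑ c, Real.negMulLog (P.prob (fun ω => (X ω, (Y ω, Z ω))) (a, (b, c))) := by
    rw [Hn, Fintype.sum_prod_type]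
    exact Finset.sum_congr rfl fun a _ => Fintype.sum_prod_type _
  have hXZ : P.Hn (fun ω => (X ω, Z ω))
      = ∑ a, ∑ c, Real.negMulLog (P.prob (fun ω => (X ω, Z ω)) (a, c)) := by
    rw [Hn, Fintype.sum_prod_type]
  have hYZ : P.Hn (fun ω => (Y ω, Z ω))
      = ∑ b, ∑ c, Real.negMulLog (P.prob (fun ω => (Y ω, Z ω)) (b, c)) := by
    rw [Hn, Fintype.sum_prod_type]
  have m3 : (∑ c, Real.negMulLog (∑ a, ∑ b, P.prob (fun ω => (X ω, (Y ω, Z ω))) (a, (b, c))))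
      = ∑ c, Real.negMulLog (P.prob Z c) :=
    Finset.sum_congr rfl fun c _ => by rw [P.marg3 X Y Z c]
  have m1 : (∑ a, ∑ c, Real.negMulLog (∑ b, P.prob (fun ω => (X ω, (Y ω, Z ω))) (a, (b, c))))
      = ∑ a, ∑ c, Real.negMulLog (P.prob (fun ω => (X ω, Z ω)) (a, c)) :=
    Finset.sum_congr rfl fun a _ => Finset.sum_congr rfl fun c _ => by rw [P.marg1 X Y Z a c]
  have m2 : (∑ b, ∑ c, Real.negMulLog (∑ a, P.prob (fun ω => (X ω, (Y ω, Z ω))) (a, (b, c))))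
      = ∑ b, ∑ c, Real.negMulLog (P.prob (fun ω => (Y ω, Z ω)) (b, c)) :=
    Finset.sum_congr rfl fun b _ => Finset.sum_congr rfl fun c _ => by rw [P.marg2 X Y Z b c]
  have hZ : P.Hn Z = ∑ c, Real.negMulLog (P.prob Z c) := rfl
  rw [condHn, condHn, hJ, hXZ, hYZ, hZ]
  linarith [core, m1, m2, m3]

end CondReduce

end FinProbSpace
namespace FinProbSpace

open Real Finset

variable (P : FinProbSpace)

lemma nonempty_omega : Nonempty P.Ω := by
  by_contra h
  have := P.sum_one
  rw [Finset.univ_eq_empty_iff.2 (not_nonempty_iff.1 h), Finset.sum_empty] at this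
  norm_num at this

section Congr

variable {α α' β β' γ : Type} [Fintype α] [DecidableEq α] [Fintype α'] [DecidableEq α']
  [Fintype β] [DecidableEq β] [Fintype β'] [DecidableEq β'] [Fintype γ] [DecidableEq γ]

/-- congruence in both arguments of condHn under mutual determination -/
lemma condHn_congr (X : P.Ω → α) (X' : P.Ω → α') (Y : P.Ω → β) (Y' : P.Ω → β')
    (f : α → α') (g : α' → α) (hf : ∀ ω, X' ω = f (X ω)) (hg : ∀ ω, X ω = g (X' ω))
    (f' : β → β') (g' : β' → β) (hf' : ∀ ω, Y' ω = f' (Y ω)) (hg' : ∀ ω, Y ω = g' (Y' ω)) :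
    P.condHn X Y = P.condHn X' Y' := by
  rw [condHn, condHn, P.Hn_congr Y Y' f' g' hf' hg',
    P.Hn_congr (fun ω => (X ω, Y ω)) (fun ω => (X' ω, Y' ω))
      (fun p => (f p.1, f' p.2)) (fun p => (g p.1, g' p.2))
      (fun ω => by simp [← hf ω, ← hf' ω]) (fun ω => by simp [← hg ω, ← hg' ω])]

lemma condHn_congr_right (X : P.Ω → α) (Y : P.Ω → β) (Y' : P.Ω → β')
    (f' : β → β') (g' : β' → β) (hf' : ∀ ω, Y' ω = f' (Y ω)) (hg' : ∀ ω, Y ω = g' (Y' ω)) :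
    P.condHn X Y = P.condHn X Y' :=
  P.condHn_congr X X Y Y' id id (fun _ => rfl) (fun _ => rfl) f' g' hf' hg'

lemma condHn_congr_left (X : P.Ω → α) (X' : P.Ω → α') (Y : P.Ω → β)
    (f : α → α') (g : α' → α) (hf : ∀ ω, X' ω = f (X ω)) (hg : ∀ ω, X ω = g (X' ω)) :
    P.condHn X Y = P.condHn X' Y :=
  P.condHn_congr X X' Y Y f g hf hg id id (fun _ => rfl) (fun _ => rfl)

/-- `H(X | Y') ≤ H(X | Y)` when `Y'` determines `Y`. -/
lemma condHn_mono_cond (X : P.Ω → α) (Y : P.Ω → β) (Y' : P.Ω → β')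
    (d : β' → β) (hd : ∀ ω, Y ω = d (Y' ω)) :
    P.condHn X Y' ≤ P.condHn X Y := by
  have h1 : P.condHn X Y' = P.condHn X (fun ω => (Y' ω, Y ω)) :=
    P.condHn_congr_right X Y' (fun ω => (Y' ω, Y ω))
      (fun y' => (y', d y')) Prod.fst (fun ω => by rw [hd ω]) (fun ω => rfl)
  rw [h1]
  exact P.condHn_cond_le X Y' Y

lemma condHn_eq_zero_iff_condH (X : P.Ω → α) (Y : P.Ω → β) :
    P.condH X Y = 0 → P.condHn X Y = 0 := by
  intro h
  rw [condH_eq_condHn, div_eq_zero_iff] at h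
  rcases h with h | h
  · exact h
  · exact absurd h (Real.log_pos (by norm_num)).ne'

/-- fst version of snd_le -/
lemma condHn_fst_le (X : P.Ω → α) (Y : P.Ω → β) (Z : P.Ω → γ) :
    P.condHn X Z ≤ P.condHn (fun ω => (X ω, Y ω)) Z := by
  have := P.condHn_snd_le Y X Z
  have hc : P.condHn (fun ω => (Y ω, X ω)) Z = P.condHn (fun ω => (X ω, Y ω)) Z :=
    P.condHn_congr_left _ _ Z Prod.swap Prod.swap (fun _ => rfl) (fun _ => rfl)
  linarith

/-- if `X` is determined by `(Y, Z)`-conditioning data, extra conditioning keeps zero. -/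
lemma condHn_zero_extend (X : P.Ω → α) (Y : P.Ω → β) (Z : P.Ω → γ)
    (h : P.condHn X Y = 0) : P.condHn X (fun ω => (Y ω, Z ω)) = 0 := by
  have hswap : P.condHn X (fun ω => (Y ω, Z ω)) = P.condHn X (fun ω => (Z ω, Y ω)) :=
    P.condHn_congr_right X _ _ Prod.swap Prod.swap (fun _ => rfl) (fun _ => rfl)
  refine le_antisymm ?_ (P.condHn_nonneg _ _)
  rw [hswap]
  exact le_trans (P.condHn_cond_le X Z Y) (le_of_eq h)

end Congr

end FinProbSpace
namespace FinProbSpace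

open Real Finset

private lemma negMulLog_prod {ι : Type} [Fintype ι] [DecidableEq ι] (t : ι → ℝ) :
    Real.negMulLog (∏ i, t i) = ∑ i, (∏ j ∈ Finset.univ.erase i, t j) * Real.negMulLog (t i) := by
  by_cases hz : ∀ i, t i ≠ 0
  · rw [Real.negMulLog, neg_mul, Real.log_prod (fun i _ => hz i), Finset.mul_sum,
      ← Finset.sum_neg_distrib]
    refine Finset.sum_congr rfl fun i _ => ?_
    rw [← Finset.mul_prod_erase Finset.univ t (Finset.mem_univ i), Real.negMulLog]
    ring
  · push_neg at hz
    obtain ⟨j, hj⟩ := hz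
    rw [Finset.prod_eq_zero (Finset.mem_univ j) hj, Real.negMulLog_zero]
    symm
    refine Finset.sum_eq_zero fun i _ => ?_
    by_cases hij : i = j
    · subst hij; rw [hj, Real.negMulLog_zero, mul_zero]
    · rw [Finset.prod_eq_zero (Finset.mem_erase.2 ⟨Ne.symm hij, Finset.mem_univ j⟩) hj, zero_mul]

variable (P : FinProbSpace)

lemma Hn_const {α : Type} [Fintype α] [DecidableEq α] (c : α) :
    P.Hn (fun _ => c) = 0 := by
  rw [Hn]
  refine Finset.sum_eq_zero fun a _ => ?_
  have : P.prob (fun _ => c) a = if c = a then 1 else 0 := by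
    unfold prob
    split
    · exact Finset.sum_congr rfl (fun ω _ => by simp_all) |>.trans P.sum_one
    · exact Finset.sum_eq_zero fun ω _ => by simp_all
  rw [this]
  split <;> simp [Real.negMulLog_zero, Real.negMulLog_one]

/-- Entropy of a jointly independent tuple is the sum of entropies. -/
lemma Hn_tuple_indep {ι V : Type} [Fintype ι] [DecidableEq ι] [Fintype V] [DecidableEq V]
    (W : ι → P.Ω → V) (h : P.iIndep W) : P.Hn (P.tuple W) = ∑ i, P.Hn (W i) := by
  rw [Hn]
  rw [Finset.sum_congr rfl fun a (_ : a ∈ Finset.univ) => by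
    rw [h a, negMulLog_prod (fun i => P.prob (W i) (a i))]]
  rw [Finset.sum_comm]
  refine Finset.sum_congr rfl fun i _ => ?_
  have hterm : ∀ a : ι → V,
      (∏ j ∈ Finset.univ.erase i, P.prob (W j) (a j)) * Real.negMulLog (P.prob (W i) (a i))
      = ∏ j, (fun j v => if j = i then Real.negMulLog (P.prob (W i) v)
          else P.prob (W j) v) j (a j) := by
    intro a
    rw [← Finset.mul_prod_erase Finset.univ _ (Finset.mem_univ i)]
    simp only [if_pos rfl]
    rw [mul_comm]
    congr 1
    refine Finset.prod_congr rfl fun j hj => ?_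
    rw [if_neg (Finset.mem_erase.1 hj).1]
  rw [Finset.sum_congr rfl fun a (_ : a ∈ Finset.univ) => hterm a]
  have hpi : ∑ a : ι → V, ∏ j, (fun j v => if j = i then Real.negMulLog (P.prob (W i) v)
      else P.prob (W j) v) j (a j)
      = ∏ j, ∑ v, (fun j v => if j = i then Real.negMulLog (P.prob (W i) v)
        else P.prob (W j) v) j v := by
    rw [Finset.prod_univ_sum, Fintype.piFinset_univ]
  rw [hpi]
  rw [Finset.prod_eq_single i (fun j _ hj => by simp only [if_neg hj]; exact P.sum_prob (W j))
    (fun hi => absurd (Finset.mem_univ i) hi)]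
  simp [Hn]

end FinProbSpace
namespace FinProbSpace

open Real Finset

variable (P : FinProbSpace)

section Tuples

variable {ι V W' : Type} [Fintype ι] [DecidableEq ι] [Fintype V] [DecidableEq V]

/-- The tuple of `X i` for `i ∈ s`. -/
def tupleS (s : Finset ι) (X : ι → P.Ω → V) : P.Ω → ({x // x ∈ s} → V) :=
  P.tuple fun i : {x // x ∈ s} => X i.1

variable {γ : Type} [Fintype γ] [DecidableEq γ]

/-- splitting off one coordinate of a tuple, as a conditional-entropy congruence -/
lemma condHn_tupleS_erase (s : Finset ι) (X : ι → P.Ω → V) (Z : P.Ω → γ)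
    (m : ι) (hm : m ∈ s) :
    P.condHn (P.tupleS s X) Z
      = P.condHn (fun ω => (X m ω, P.tupleS (s.erase m) X ω)) Z := by
  refine P.condHn_congr_left _ _ Z
    (fun t => (t ⟨m, hm⟩, fun i => t ⟨i.1, Finset.mem_of_mem_erase i.2⟩))
    (fun p i => if h : i.1 = m then p.1 else p.2 ⟨i.1, Finset.mem_erase.2 ⟨h, i.2⟩⟩)
    (fun ω => rfl) (fun ω => ?_)
  funext i
  dsimp [tupleS, tuple]
  split
  · next h => rw [h]
  · rfl

/-- the second-argument version -/
lemma condHn_tupleS_erase_right {α : Type} [Fintype α] [DecidableEq α]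
    (s : Finset ι) (X : ι → P.Ω → V) (A : P.Ω → α) (m : ι) (hm : m ∈ s) :
    P.condHn A (P.tupleS s X)
      = P.condHn A (fun ω => (X m ω, P.tupleS (s.erase m) X ω)) := by
  refine P.condHn_congr_right A _ _
    (fun t => (t ⟨m, hm⟩, fun i => t ⟨i.1, Finset.mem_of_mem_erase i.2⟩))
    (fun p i => if h : i.1 = m then p.1 else p.2 ⟨i.1, Finset.mem_erase.2 ⟨h, i.2⟩⟩)
    (fun ω => rfl) (fun ω => ?_)
  funext i
  dsimp [tupleS, tuple]
  split
  · next h => rw [h]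
  · rfl

lemma condHn_empty_tuple {α : Type} [Fintype α] [DecidableEq α]
    (X : ι → P.Ω → V) (A : P.Ω → α) :
    P.condHn A (P.tupleS (∅ : Finset ι) X) = P.Hn A := by
  haveI : IsEmpty {x : ι // x ∈ (∅ : Finset ι)} :=
    ⟨fun i => absurd i.2 (Finset.notMem_empty _)⟩
  rw [condHn]
  have h1 : P.Hn (fun ω => (A ω, P.tupleS (∅ : Finset ι) X ω)) = P.Hn A :=
    P.Hn_congr _ A Prod.fst (fun a => (a, fun i => isEmptyElim i))
      (fun ω => rfl) (fun ω => by
        refine Prod.ext rfl ?_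
        funext i
        exact isEmptyElim i)
  have h2 : P.Hn (P.tupleS (∅ : Finset ι) X) = 0 := by
    obtain ⟨ω₀⟩ := P.nonempty_omega
    have : P.tupleS (∅ : Finset ι) X = fun _ => P.tupleS (∅ : Finset ι) X ω₀ := by
      funext ω i
      exact isEmptyElim i
    rw [this, P.Hn_const]
  rw [h1, h2, sub_zero]

/-- subadditivity of conditional entropy over tuples -/
lemma condHn_tupleS_subadd (s : Finset ι) (X : ι → P.Ω → V) (Z : P.Ω → γ) :
    P.condHn (P.tupleS s X) Z ≤ ∑ i ∈ s, P.condHn (X i) Z := by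
  classical
  induction s using Finset.induction_on with
  | empty =>
      haveI : IsEmpty {x : ι // x ∈ (∅ : Finset ι)} :=
        ⟨fun i => absurd i.2 (Finset.notMem_empty _)⟩
      obtain ⟨ω₀⟩ := P.nonempty_omega
      rw [Finset.sum_empty,
        P.condHn_of_fn (P.tupleS (∅ : Finset ι) X) Z
          (fun _ => P.tupleS (∅ : Finset ι) X ω₀)
          (fun ω => funext fun i => isEmptyElim i)]
  | @insert a s ha ih =>
      rw [P.condHn_tupleS_erase (insert a s) X Z a (Finset.mem_insert_self a s)]
      have herase : (insert a s).erase a = s := Finset.erase_insert ha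
      have hcongr : P.condHn (fun ω => (X a ω, P.tupleS ((insert a s).erase a) X ω)) Z
          = P.condHn (fun ω => (X a ω, P.tupleS s X ω)) Z := by
        rw [herase]
      rw [hcongr, Finset.sum_insert ha]
      have hchain := P.condHn_chain (X a) (P.tupleS s X) Z
      have hle := P.condHn_cond_le (X a) (P.tupleS s X) Z
      linarith
  done

/-- a single coordinate has smaller conditional entropy than the tuple -/
lemma condHn_mem_le_tupleS (s : Finset ι) (X : ι → P.Ω → V) (Z : P.Ω → γ)
    (m : ι) (hm : m ∈ s) :
    P.condHn (X m) Z ≤ P.condHn (P.tupleS s X) Z := by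
  rw [P.condHn_tupleS_erase s X Z m hm]
  exact P.condHn_fst_le (X m) (P.tupleS (s.erase m) X) Z

/-- splitting off two coordinates -/
lemma condHn_tupleS_pair_split (s : Finset ι) (X : ι → P.Ω → V) (Z : P.Ω → γ)
    (i₁ i₂ : ι) (h₁ : i₁ ∈ s) (h₂ : i₂ ∈ s) (hne : i₁ ≠ i₂) :
    P.condHn (P.tupleS s X) Z ≤ P.condHn (fun ω => (X i₁ ω, X i₂ ω)) Z
      + ∑ i ∈ (s.erase i₁).erase i₂, P.condHn (X i) Z := by
  classical
  have h₂' : i₂ ∈ s.erase i₁ := Finset.mem_erase.2 ⟨Ne.symm hne, h₂⟩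
  rw [P.condHn_tupleS_erase s X Z i₁ h₁]
  have c1 := P.condHn_chain (X i₁) (P.tupleS (s.erase i₁) X) Z
  have e2 := P.condHn_tupleS_erase (s.erase i₁) X Z i₂ h₂'
  have c2 := P.condHn_chain (X i₂) (P.tupleS ((s.erase i₁).erase i₂) X) Z
  have m1 : P.condHn (X i₁) (fun ω => (P.tupleS (s.erase i₁) X ω, Z ω))
      ≤ P.condHn (X i₁) (fun ω => (X i₂ ω, Z ω)) :=
    P.condHn_mono_cond (X i₁) _ _
      (fun p => (p.1 ⟨i₂, h₂'⟩, p.2)) (fun ω => rfl)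
  have m2 : P.condHn (X i₂) (fun ω => (P.tupleS ((s.erase i₁).erase i₂) X ω, Z ω))
      ≤ P.condHn (X i₂) Z :=
    P.condHn_cond_le (X i₂) (P.tupleS ((s.erase i₁).erase i₂) X) Z
  have sub := P.condHn_tupleS_subadd ((s.erase i₁).erase i₂) X Z
  have cpair := P.condHn_chain (X i₁) (X i₂) Z
  linarith

/-- For jointly independent `W` and `k ∉ T`, `H(W k | W_T) ≥ H(W k)`. -/
lemma indep_cond_ge [Fintype W'] [DecidableEq W']
    (Wf : ι → P.Ω → W') (hind : P.iIndep Wf) (k : ι) (T : Finset ι) (hk : k ∉ T) :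
    P.Hn (Wf k) ≤ P.condHn (Wf k) (P.tupleS T Wf) := by
  classical
  set kc : Finset ι := {k}ᶜ
  have hTsub : T ⊆ kc := fun i hi => by
    simp only [kc, Finset.mem_compl, Finset.mem_singleton]
    rintro rfl
    exact hk hi
  -- H(W k | W_T) ≥ H(W k | W_{k̄})
  have mono : P.condHn (Wf k) (P.tupleS kc Wf) ≤ P.condHn (Wf k) (P.tupleS T Wf) := by
    refine P.condHn_mono_cond (Wf k) (P.tupleS T Wf) (P.tupleS kc Wf)
      (fun t i => t ⟨i.1, hTsub i.2⟩) (fun ω => rfl)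
  refine le_trans ?_ mono
  -- H(W k | W_{k̄}) = H(W_full) - H(W_{k̄})
  have hfull : P.Hn (fun ω => (Wf k ω, P.tupleS kc Wf ω)) = P.Hn (P.tuple Wf) := by
    refine P.Hn_congr _ _
      (fun p i => if h : i = k then p.1 else p.2 ⟨i, by simp [kc, h]⟩)
      (fun t => (t k, fun i => t i.1)) (fun ω => ?_) (fun ω => rfl)
    funext i
    dsimp [tupleS, tuple]
    split
    · next h => rw [h]
    · rfl
  have hsum := P.Hn_tuple_indep Wf hind
  have hsub : P.Hn (P.tupleS kc Wf) ≤ ∑ i ∈ kc, P.Hn (Wf i) := by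
    have := P.condHn_tupleS_subadd kc Wf (fun _ : P.Ω => (0 : Fin 1))
    have hconst : ∀ {α : Type} [Fintype α] [DecidableEq α] (A : P.Ω → α),
        P.condHn A (fun _ : P.Ω => (0 : Fin 1)) = P.Hn A := by
      intro α _ _ A
      rw [condHn, P.Hn_const, sub_zero]
      exact P.Hn_congr _ A Prod.fst (fun a => (a, 0)) (fun ω => rfl) (fun ω => rfl)
    rw [hconst] at this
    refine le_trans this (le_of_eq (Finset.sum_congr rfl fun i _ => hconst (Wf i)))
  have hsplit : ∑ i, P.Hn (Wf i) = P.Hn (Wf k) + ∑ i ∈ kc, P.Hn (Wf i) := by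
    have huniv : (Finset.univ : Finset ι) = insert k kc := by
      ext i
      simp only [kc, Finset.mem_insert, Finset.mem_compl, Finset.mem_singleton, Finset.mem_univ,
        true_iff]
      tauto
    have hknotin : k ∉ kc := by simp [kc]
    rw [huniv, Finset.sum_insert hknotin]
  rw [condHn, hfull, hsum]
  linarith

end Tuples

end FinProbSpace
/-- A locally decodable code with `K` source symbols of entropy `Lw`, `M` coded symbols of
entropy `Lx`, and locality `N`. -/
structure LDC (K N M : ℕ) (Lw Lx : ℝ) where
  P : FinProbSpace
  V : Type
  [fV : Fintype V]
  [dV : DecidableEq V]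
  V' : Type
  [fV' : Fintype V']
  [dV' : DecidableEq V']
  /-- the source symbols -/
  W : Fin K → P.Ω → V
  /-- the coded symbols -/
  X : Fin M → P.Ω → V'
  indep : P.iIndep W
  HW : ∀ k, P.H (W k) = Lw
  coded_fn : ∀ m, ∃ f : (Fin K → V) → V', ∀ ω, X m ω = f (fun k => W k ω)
  HX : ∀ m, P.H (X m) = Lx
  /-- the decoding supersets -/
  decSets : Fin K → Finset (Finset (Fin M))
  decSets_nonempty : ∀ k, (decSets k).Nonempty
  decSets_card : ∀ k, ∀ s ∈ decSets k, s.card = N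
  decodes : ∀ k, ∀ s ∈ decSets k,
    P.condH (W k) (P.tuple fun i : {x // x ∈ s} => X i.1) = 0

attribute [instance] LDC.fV LDC.dV LDC.fV' LDC.dV'

/-- A universal LDC: every coded symbol appears in some decoding set of every source symbol. -/
def LDC.IsUniversal {K N M : ℕ} {Lw Lx : ℝ} (C : LDC K N M Lw Lx) : Prop :=
  ∀ (m : Fin M) (k : Fin K), ∃ s ∈ C.decSets k, m ∈ s

/-- A perfectly smooth LDC: for each source symbol, every coded symbol lies in the same
number of decoding sets. -/
def LDC.IsSmooth {K N M : ℕ} {Lw Lx : ℝ} (C : LDC K N M Lw Lx) : Prop :=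
  ∀ (k : Fin K) (m m' : Fin M),
    ((C.decSets k).filter (fun s => m ∈ s)).card =
      ((C.decSets k).filter (fun s => m' ∈ s)).card

/-- `C*(N, K) = N (1 + 1/N + ⋯ + 1/N^{K-1})⁻¹`. -/
def Cstar (N K : ℕ) : ℝ := N / (∑ j ∈ Finset.range K, (1 / (N : ℝ)) ^ j)

/-- An `N`-query information retrieval scheme with `K` messages of entropy `Lw` and
answer sets of sizes `Mn n` with answers of entropy `Lx`. -/
structure IRScheme (K N : ℕ) (Mn : Fin N → ℕ) (Lw Lx : ℝ) where
  P : FinProbSpace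
  V : Type
  [fV : Fintype V]
  [dV : DecidableEq V]
  V' : Type
  [fV' : Fintype V']
  [dV' : DecidableEq V']
  /-- the messages -/
  W : Fin K → P.Ω → V
  /-- `A n m` is the `m`-th possible answer of database `n` -/
  A : (n : Fin N) → Fin (Mn n) → P.Ω → V'
  indep : P.iIndep W
  HW : ∀ k, P.H (W k) = Lw
  ans_fn : ∀ n m, ∃ f : (Fin K → V) → V', ∀ ω, A n m ω = f (fun k => W k ω)
  HA : ∀ n m, P.H (A n m) = Lx
  /-- the decoding supersets: each decoding set consists of one answer index per database -/
  Q : Fin K → Finset ((n : Fin N) → Fin (Mn n))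
  Q_nonempty : ∀ k, (Q k).Nonempty
  decodes : ∀ k, ∀ q ∈ Q k, P.condH (W k) (P.tuple fun n => A n (q n)) = 0

attribute [instance] IRScheme.fV IRScheme.dV IRScheme.fV' IRScheme.dV'

/-- A repudiative (RIR_max) scheme: every possible answer of every database appears in some
decoding set of every message. -/
def IRScheme.IsRIR {K N : ℕ} {Mn : Fin N → ℕ} {Lw Lx : ℝ} (C : IRScheme K N Mn Lw Lx) : Prop :=
  ∀ (n : Fin N) (m : Fin (Mn n)) (k : Fin K), ∃ q ∈ C.Q k, q n = m

/-- A perfectly private (PIR_max) scheme: for each message there is a distribution on its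
decoding sets such that the marginal distribution of the query to each database does not
depend on the message. -/
def IRScheme.IsPIR {K N : ℕ} {Mn : Fin N → ℕ} {Lw Lx : ℝ} (C : IRScheme K N Mn Lw Lx) : Prop :=
  ∃ μ : Fin K → ((n : Fin N) → Fin (Mn n)) → ℝ,
    (∀ k q, 0 ≤ μ k q) ∧ (∀ k, ∑ q ∈ C.Q k, μ k q = 1) ∧
    (∀ (k k' : Fin K) (n : Fin N) (m : Fin (Mn n)),
      ∑ q ∈ (C.Q k).filter (fun q => q n = m), μ k q =
        ∑ q ∈ (C.Q k').filter (fun q => q n = m), μ k' q)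

/-- `C_K(N) = (1 + 1/N + ⋯ + 1/N^{K-1})⁻¹`, the capacity of PIR. -/
def CK (N K : ℕ) : ℝ := (∑ j ∈ Finset.range K, (1 / (N : ℝ)) ^ j)⁻¹

/-- Distinct desired information property, Lemma 3, Property 2(b): in a
capacity achieving ULDC, for every decoding set `S ∈ 𝒮_k` and distinct `i₁, i₂ ∈ S`,
`H(X_{i₁} | X_{i₂}, W_k̄) = H(X_{i₁} | W_k̄)`. -/
theorem uldc_distinct_information (K N M : ℕ) (hK : 1 ≤ K) (hN : 2 ≤ N) (Lw Lx : ℝ)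
    (hLw : 0 < Lw) (C : LDC K N M Lw Lx) (hU : C.IsUniversal)
    (hcap : Lw / Lx = Cstar N K)
    (k : Fin K) (S : Finset (Fin M)) (hS : S ∈ C.decSets k)
    (i₁ i₂ : Fin M) (h₁ : i₁ ∈ S) (h₂ : i₂ ∈ S) (hne : i₁ ≠ i₂) :
    C.P.condH (C.X i₁)
      (fun ω => (C.X i₂ ω,
        (C.P.tuple fun j : {x // x ∈ ({k}ᶜ : Finset (Fin K))} => C.W j.1) ω)) =
    C.P.condH (C.X i₁)
      (C.P.tuple fun j : {x // x ∈ ({k}ᶜ : Finset (Fin K))} => C.W j.1) := by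
  classical
  have hl2 : (0:ℝ) < Real.log 2 := Real.log_pos (by norm_num)
  set l2 := Real.log 2 with hl2def
  have hn0 : (0:ℝ) < (N:ℝ) := by
    have : (0:ℕ) < N := lt_of_lt_of_le (by norm_num) hN
    exact_mod_cast this
  have hne0 : (N:ℝ) ≠ 0 := ne_of_gt hn0
  set P := C.P with hP
  set n : ℝ := (N:ℝ) with hndef
  set G : ℝ := ∑ j ∈ Finset.range K, (1 / n) ^ j with hGdef
  have hG : 0 < G := by
    rw [hGdef]
    refine Finset.sum_pos (fun j _ => by positivity) ?_
    exact Finset.nonempty_range_iff.2 (by omega)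
  have hCstar : Cstar N K = n / G := rfl
  have hLx : 0 < Lx := by
    rcases lt_trichotomy Lx 0 with h | h | h
    · exfalso
      have hneg : Lw / Lx < 0 := div_neg_of_pos_of_neg hLw h
      rw [hcap, hCstar] at hneg
      have : 0 < n / G := div_pos hn0 hG
      linarith
    · exfalso
      rw [h, div_zero, hCstar] at hcap
      have : 0 < n / G := div_pos hn0 hG
      linarith [hcap]
    · exact h
  have hLxval : Lx = Lw * G / n := by
    rw [hCstar] at hcap
    rw [div_eq_div_iff (ne_of_gt hLx) (ne_of_gt hG)] at hcap
    field_simp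
    linarith [hcap]
  -- the bound function
  set B : ℕ → ℝ := fun j => Lx * n ^ j - Lw * ∑ i ∈ Finset.range j, n ^ i with hBdef
  -- main induction: H(X_m | W_T) ≤ B(|T|) (in nats: times log 2)
  have main : ∀ (j : ℕ) (T : Finset (Fin K)), T.card = j → ∀ m : Fin M,
      P.condHn (C.X m) (P.tupleS T C.W) ≤ B j * l2 := by
    intro j
    induction j with
    | zero =>
        intro T hT m
        rw [Finset.card_eq_zero.1 hT, P.condHn_empty_tuple]
        have hHn : P.Hn (C.X m) = Lx * l2 := by
          have h := C.HX m
          rw [P.H_eq_Hn] at h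
          exact (div_eq_iff (ne_of_gt hl2)).1 h
        rw [hHn, hBdef]
        simp
    | succ j ih =>
        intro T hT m
        have hpos : 0 < T.card := by omega
        obtain ⟨k', hk'⟩ := Finset.card_pos.1 hpos
        have hT' : (T.erase k').card = j := by
          rw [Finset.card_erase_of_mem hk', hT]
          omega
        have hknotT' : k' ∉ T.erase k' := Finset.notMem_erase k' T
        obtain ⟨S', hS', hmS'⟩ := hU m k'
        have hScard : S'.card = N := C.decSets_card k' S' hS'
        -- abbreviations
        have step1 : P.condHn (C.X m) (P.tupleS T C.W)
            ≤ P.condHn (P.tupleS S' C.X) (P.tupleS T C.W) :=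
          P.condHn_mem_le_tupleS S' C.X _ m hmS'
        have step2 : P.condHn (P.tupleS S' C.X) (P.tupleS T C.W)
            = P.condHn (P.tupleS S' C.X)
                (fun ω => (C.W k' ω, P.tupleS (T.erase k') C.W ω)) :=
          P.condHn_tupleS_erase_right T C.W (P.tupleS S' C.X) k' hk'
        have c1 := P.condHn_chain (C.W k') (P.tupleS S' C.X) (P.tupleS (T.erase k') C.W)
        have c2 := P.condHn_chain (P.tupleS S' C.X) (C.W k') (P.tupleS (T.erase k') C.W)
        have c3 : P.condHn (fun ω => (C.W k' ω, P.tupleS S' C.X ω)) (P.tupleS (T.erase k') C.W)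
            = P.condHn (fun ω => (P.tupleS S' C.X ω, C.W k' ω)) (P.tupleS (T.erase k') C.W) :=
          P.condHn_congr_left _ _ _ Prod.swap Prod.swap (fun _ => rfl) (fun _ => rfl)
        have c4 : P.condHn (C.W k')
            (fun ω => (P.tupleS S' C.X ω, P.tupleS (T.erase k') C.W ω)) = 0 := by
          refine P.condHn_zero_extend (C.W k') (P.tupleS S' C.X) (P.tupleS (T.erase k') C.W) ?_
          exact P.condHn_eq_zero_iff_condH _ _ (C.decodes k' S' hS')
        have c5 : P.Hn (C.W k') ≤ P.condHn (C.W k') (P.tupleS (T.erase k') C.W) :=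
          P.indep_cond_ge C.W C.indep k' (T.erase k') hknotT'
        have c6 : P.Hn (C.W k') = Lw * l2 := by
          have h := C.HW k'
          rw [P.H_eq_Hn] at h
          exact (div_eq_iff (ne_of_gt hl2)).1 h
        have c7 := P.condHn_tupleS_subadd S' C.X (P.tupleS (T.erase k') C.W)
        have c8 : ∑ i ∈ S', P.condHn (C.X i) (P.tupleS (T.erase k') C.W) ≤ n * (B j * l2) := by
          have := Finset.sum_le_card_nsmul S'
            (fun i => P.condHn (C.X i) (P.tupleS (T.erase k') C.W)) (B j * l2)
            (fun i _ => ih (T.erase k') hT' i)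
          rw [hScard, nsmul_eq_mul] at this
          exact this
        have hB : B (j + 1) * l2 = n * (B j * l2) - Lw * l2 := by
          rw [hBdef]
          simp only
          rw [Finset.sum_range_succ', pow_zero]
          simp only [pow_succ]
          rw [← Finset.sum_mul]
          ring
        rw [hB]
        linarith
  -- instantiate at T = {k}ᶜ
  have hkcard : ({k}ᶜ : Finset (Fin K)).card = K - 1 := by
    rw [Finset.card_compl, Finset.card_singleton, Fintype.card_fin]
  -- value of the bound
  have hK1 : K - 1 + 1 = K := by omega
  have hSK : ∑ i ∈ Finset.range K, n ^ i
      = n * (∑ i ∈ Finset.range (K - 1), n ^ i) + 1 := by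
    conv_lhs => rw [← hK1]
    rw [Finset.sum_range_succ', pow_zero]
    simp only [pow_succ]
    rw [← Finset.sum_mul]
    ring
  have hGn : G * n ^ (K - 1) = ∑ i ∈ Finset.range K, n ^ i := by
    rw [hGdef, Finset.sum_mul]
    rw [← Finset.sum_range_reflect (fun i => n ^ i) K]
    refine Finset.sum_congr rfl fun j hj => ?_
    have hjK : j ≤ K - 1 := by
      have := Finset.mem_range.1 hj
      omega
    have hadd : K - 1 - j + j = K - 1 := by omega
    have h2 : (n:ℝ) ^ j ≠ 0 := pow_ne_zero _ hne0
    rw [one_div, inv_pow]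
    field_simp
    rw [← pow_add, Nat.add_sub_of_le hjK]
  have hBval : B (K - 1) = Lw / n := by
    calc B (K - 1) = Lw * G / n * n ^ (K - 1) - Lw * ∑ i ∈ Finset.range (K - 1), n ^ i := by
          rw [hBdef]; simp only; rw [hLxval]
      _ = Lw * (G * n ^ (K - 1)) / n - Lw * ∑ i ∈ Finset.range (K - 1), n ^ i := by ring
      _ = Lw * (n * (∑ i ∈ Finset.range (K - 1), n ^ i) + 1) / n
            - Lw * ∑ i ∈ Finset.range (K - 1), n ^ i := by rw [hGn, hSK]
      _ = Lw / n := by field_simp; ring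
  -- final part
  have hkc : k ∉ ({k}ᶜ : Finset (Fin K)) := by simp
  have bnd : ∀ i : Fin M,
      P.condHn (C.X i) (P.tupleS ({k}ᶜ : Finset (Fin K)) C.W) ≤ B (K - 1) * l2 :=
    main (K - 1) ({k}ᶜ) hkcard
  have d1 := P.condHn_chain (C.W k) (P.tupleS S C.X) (P.tupleS ({k}ᶜ : Finset (Fin K)) C.W)
  have d2 := P.condHn_chain (P.tupleS S C.X) (C.W k) (P.tupleS ({k}ᶜ : Finset (Fin K)) C.W)
  have d3 : P.condHn (fun ω => (C.W k ω, P.tupleS S C.X ω))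
        (P.tupleS ({k}ᶜ : Finset (Fin K)) C.W)
      = P.condHn (fun ω => (P.tupleS S C.X ω, C.W k ω))
        (P.tupleS ({k}ᶜ : Finset (Fin K)) C.W) :=
    P.condHn_congr_left _ _ _ Prod.swap Prod.swap (fun _ => rfl) (fun _ => rfl)
  have d4 : P.condHn (C.W k)
      (fun ω => (P.tupleS S C.X ω, P.tupleS ({k}ᶜ : Finset (Fin K)) C.W ω)) = 0 := by
    refine P.condHn_zero_extend (C.W k) (P.tupleS S C.X)
      (P.tupleS ({k}ᶜ : Finset (Fin K)) C.W) ?_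
    exact P.condHn_eq_zero_iff_condH _ _ (C.decodes k S hS)
  have d5 : Lw * l2 ≤ P.condHn (C.W k) (P.tupleS ({k}ᶜ : Finset (Fin K)) C.W) := by
    have hWk : P.Hn (C.W k) = Lw * l2 := by
      have h := C.HW k
      rw [P.H_eq_Hn] at h
      exact (div_eq_iff (ne_of_gt hl2)).1 h
    rw [← hWk]
    exact P.indep_cond_ge C.W C.indep k _ hkc
  have d6 : 0 ≤ P.condHn (P.tupleS S C.X)
      (fun ω => (C.W k ω, P.tupleS ({k}ᶜ : Finset (Fin K)) C.W ω)) :=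
    P.condHn_nonneg _ _
  have hlow : Lw * l2 ≤ P.condHn (P.tupleS S C.X)
      (P.tupleS ({k}ᶜ : Finset (Fin K)) C.W) := by
    linarith
  have psplit := P.condHn_tupleS_pair_split S C.X
    (P.tupleS ({k}ᶜ : Finset (Fin K)) C.W) i₁ i₂ h₁ h₂ hne
  have hcard2 : ((S.erase i₁).erase i₂).card = N - 2 := by
    rw [Finset.card_erase_of_mem (Finset.mem_erase.2 ⟨Ne.symm hne, h₂⟩),
      Finset.card_erase_of_mem h₁, C.decSets_card k S hS]
    omega
  have hsum2 : ∑ i ∈ (S.erase i₁).erase i₂,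
      P.condHn (C.X i) (P.tupleS ({k}ᶜ : Finset (Fin K)) C.W)
      ≤ (n - 2) * (B (K - 1) * l2) := by
    have h := Finset.sum_le_card_nsmul ((S.erase i₁).erase i₂)
      (fun i => P.condHn (C.X i) (P.tupleS ({k}ᶜ : Finset (Fin K)) C.W))
      (B (K - 1) * l2) (fun i _ => bnd i)
    rw [hcard2, nsmul_eq_mul] at h
    have hcast : ((N - 2 : ℕ) : ℝ) = n - 2 := by
      rw [hndef]
      push_cast [Nat.cast_sub hN]
      norm_num
    rw [hcast] at h
    exact h
  have cpair := P.condHn_chain (C.X i₁) (C.X i₂)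
    (P.tupleS ({k}ᶜ : Finset (Fin K)) C.W)
  have ple := P.condHn_cond_le (C.X i₁) (C.X i₂)
    (P.tupleS ({k}ᶜ : Finset (Fin K)) C.W)
  have b1 := bnd i₁
  have b2 := bnd i₂
  have e1 : Lw * l2 - (n - 2) * (B (K - 1) * l2) = 2 * (B (K - 1) * l2) := by
    rw [hBval]
    field_simp
    ring
  have hfinal : P.condHn (C.X i₁)
      (fun ω => (C.X i₂ ω, P.tupleS ({k}ᶜ : Finset (Fin K)) C.W ω))
      = P.condHn (C.X i₁) (P.tupleS ({k}ᶜ : Finset (Fin K)) C.W) := by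
    refine le_antisymm ple ?_
    linarith
  rw [P.condH_eq_condHn, P.condH_eq_condHn]
  exact congrArg (· / Real.log 2) hfinal
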